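/- Let 𝕏 be a finite edge-trivial graph of groups with half-edge adjacency matrix W of size k×k. Then the reciprocal of the Ihara zeta function of 𝕏 equals det(I_k - Wu); equivalently, the number C_n of closed reduced paths in 𝕏 of length n equals tr(W^n) for all n ≥ 1. -/
import Mathlib


structure LegGraph where
  V : Type
  H : Type
  [fV : Fintype V]
  [fH : Fintype H]
  [dV : DecidableEq V]
  [dH : DecidableEq H]
  r : H → V
  bar : H → H
  bar_bar : ∀ h, bar (bar h) = h

attribute [instance] LegGraph.fV LegGraph.fH LegGraph.dV LegGraph.dH

namespace LegGraph

def IsClosedPath (X : LegGraph) {n : ℕ} (h : ZMod n → X.H) : Prop :=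
  ∀ j, X.r (h (j + 1)) = X.r (X.bar (h j))

end LegGraph

/-- A finite edge-trivial graph of groups: a finite graph with legs together with a
finite group at each vertex. -/
structure GraphOfGroups where
  X : LegGraph
  Gp : X.V → Type
  [grp : ∀ v, Group (Gp v)]
  [fin : ∀ v, Fintype (Gp v)]

attribute [instance] GraphOfGroups.grp GraphOfGroups.fin

namespace GraphOfGroups

/-- The charge of a vertex: the order of its vertex group. -/
def charge (𝕏 : GraphOfGroups) (v : 𝕏.X.V) : ℕ := Fintype.card (𝕏.Gp v)

/-- The half-edge adjacency matrix `W` of an edge-trivial graph of groups. -/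
def Wmat (𝕏 : GraphOfGroups) : Matrix 𝕏.X.H 𝕏.X.H ℤ := fun h h' =>
  if h' = 𝕏.X.bar h then (𝕏.charge (𝕏.X.r h') : ℤ) - 1
  else if 𝕏.X.r (𝕏.X.bar h) = 𝕏.X.r h' then (𝕏.charge (𝕏.X.r h') : ℤ) else 0

/-- A closed reduced path of length `n` in a graph of groups: a cyclic sequence of
half-edges `h_j` together with group elements `g_j ∈ X_{v_j}` (the group of the root of
`h_j`, which `g_j` precedes), such that the underlying half-edge sequence is a closed
path and for each `j` either `h_{j+1} ≠ h̄_j` or the intervening group element is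
nontrivial. -/
def CRPath (𝕏 : GraphOfGroups) (n : ℕ) : Type :=
  {p : (h : ZMod n → 𝕏.X.H) × ((j : ZMod n) → 𝕏.Gp (𝕏.X.r (h j))) //
    𝕏.X.IsClosedPath p.1 ∧
    ∀ j : ZMod n, p.1 (j + 1) ≠ 𝕏.X.bar (p.1 j) ∨ p.2 (j + 1) ≠ 1}

end GraphOfGroups

open Finset Matrix

section MatLemmas
variable {ι : Type*} [Fintype ι] [DecidableEq ι]

lemma pow_apply_path (A : Matrix ι ι ℤ) : ∀ (m : ℕ) (a b : ι),
    (A ^ (m+1)) a b =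
      ∑ f : Fin m → ι, (∏ k : Fin m, A ((Fin.cons a f : Fin (m+1) → ι) k.castSucc) (f k)) *
        A ((Fin.cons a f : Fin (m+1) → ι) (Fin.last m)) b := by
  intro m
  induction m with
  | zero =>
    intro a b
    simp [Finset.univ_unique]
  | succ m ih =>
    intro a b
    rw [pow_succ', Matrix.mul_apply]
    rw [← (Fin.consEquiv (fun _ : Fin (m+1) => ι)).sum_comp]
    rw [Fintype.sum_prod_type]
    refine Finset.sum_congr rfl fun c _ => ?_
    rw [ih c b, Finset.mul_sum]
    refine Finset.sum_congr rfl fun f _ => ?_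
    show A a c * ((∏ k : Fin m, A ((Fin.cons c f : Fin (m+1) → ι) k.castSucc) (f k)) *
        A ((Fin.cons c f : Fin (m+1) → ι) (Fin.last m)) b)
      = (∏ x : Fin (m+1), A ((Fin.cons a (Fin.cons c f) : Fin (m+2) → ι) x.castSucc)
          ((Fin.cons c f : Fin (m+1) → ι) x)) *
        A ((Fin.cons a (Fin.cons c f) : Fin (m+2) → ι) (Fin.last (m+1))) b
    rw [Fin.prod_univ_succ
      (f := fun k : Fin (m+1) => A ((Fin.cons a (Fin.cons c f) : Fin (m+2) → ι) k.castSucc)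
        ((Fin.cons c f : Fin (m+1) → ι) k))]
    have h1 : ∏ k : Fin m, A ((Fin.cons a (Fin.cons c f) : Fin (m+2) → ι) (k.succ).castSucc)
          ((Fin.cons c f : Fin (m+1) → ι) k.succ)
        = ∏ k : Fin m, A ((Fin.cons c f : Fin (m+1) → ι) k.castSucc) (f k) := by
      refine Finset.prod_congr rfl fun k _ => ?_
      rw [← Fin.succ_castSucc, Fin.cons_succ, Fin.cons_succ]
    have h2 : (Fin.cons a (Fin.cons c f) : Fin (m+2) → ι) (Fin.last (m+1))
        = (Fin.cons c f : Fin (m+1) → ι) (Fin.last m) := by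
      rw [show Fin.last (m+1) = (Fin.last m).succ from rfl, Fin.cons_succ]
    rw [h1, h2]
    simp only [Fin.castSucc_zero, Fin.cons_zero]
    ring

lemma trace_pow_cyclic (A : Matrix ι ι ℤ) (m : ℕ) :
    Matrix.trace (A ^ (m+1)) = ∑ g : Fin (m+1) → ι, ∏ j : Fin (m+1), A (g j) (g (j+1)) := by
  rw [Matrix.trace]
  rw [← (Fin.consEquiv (fun _ : Fin (m+1) => ι)).sum_comp, Fintype.sum_prod_type]
  refine Finset.sum_congr rfl fun a _ => ?_
  rw [show Matrix.diag (A ^ (m+1)) a = (A ^ (m+1)) a a from rfl]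
  rw [pow_apply_path]
  refine Finset.sum_congr rfl fun f _ => ?_
  show (∏ k : Fin m, A ((Fin.cons a f : Fin (m+1) → ι) k.castSucc) (f k)) *
      A ((Fin.cons a f : Fin (m+1) → ι) (Fin.last m)) a
    = ∏ j : Fin (m+1), A ((Fin.cons a f : Fin (m+1) → ι) j) ((Fin.cons a f : Fin (m+1) → ι) (j+1))
  rw [Fin.prod_univ_castSucc
    (f := fun j : Fin (m+1) => A ((Fin.cons a f : Fin (m+1) → ι) j) ((Fin.cons a f : Fin (m+1) → ι) (j+1)))]
  congr 1
  · refine Finset.prod_congr rfl fun k _ => ?_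
    have h3 : (k.castSucc + 1 : Fin (m+1)) = k.succ := by
      ext
      rw [Fin.val_add_one_of_lt (Fin.castSucc_lt_last k)]
      rfl
    rw [h3, Fin.cons_succ]
  · rw [Fin.last_add_one, Fin.cons_zero]
end MatLemmas

/-- two-term determinant formula. For a finite edge-trivial graph of
groups `𝕏` with half-edge adjacency matrix `W`, the number `C_n` of closed reduced
paths of length `n` equals `tr(W^n)` for all `n ≥ 1`; equivalently
`ζ(u,𝕏)⁻¹ = det(I_k - Wu)`. -/
theorem gog_two_term (𝕏 : GraphOfGroups) (n : ℕ) (hn : 1 ≤ n) :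
    (Nat.card (𝕏.CRPath n) : ℤ) = Matrix.trace (𝕏.Wmat ^ n) := by
  classical
  obtain ⟨m, rfl⟩ : ∃ m, n = m + 1 := ⟨n - 1, by omega⟩
  let P : (h : ZMod (m+1) → 𝕏.X.H) → ((j : ZMod (m+1)) → 𝕏.Gp (𝕏.X.r (h j))) → Prop :=
    fun h g => 𝕏.X.IsClosedPath h ∧ ∀ j : ZMod (m+1), h (j + 1) ≠ 𝕏.X.bar (h j) ∨ g (j + 1) ≠ 1
  let E1 : 𝕏.CRPath (m+1) ≃ Σ h : ZMod (m+1) → 𝕏.X.H,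
      {g : (j : ZMod (m+1)) → 𝕏.Gp (𝕏.X.r (h j)) // P h g} :=
    { toFun := fun p => ⟨p.1.1, p.1.2, p.2⟩
      invFun := fun q => ⟨⟨q.1, q.2.1⟩, q.2.2⟩
      left_inv := fun p => rfl
      right_inv := fun q => rfl }
  have key : ∀ h : ZMod (m+1) → 𝕏.X.H,
      (Fintype.card {g : (j : ZMod (m+1)) → 𝕏.Gp (𝕏.X.r (h j)) // P h g} : ℤ)
        = ∏ j : ZMod (m+1), 𝕏.Wmat (h j) (h (j+1)) := by
    intro h
    have hre : ∏ j : ZMod (m+1), 𝕏.Wmat (h j) (h (j+1))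
        = ∏ i : ZMod (m+1), 𝕏.Wmat (h (i-1)) (h i) := by
      refine Fintype.prod_equiv (Equiv.addRight (1 : ZMod (m+1))) _ _ fun j => ?_
      simp
    rw [hre]
    by_cases hc : 𝕏.X.IsClosedPath h
    · have e2 : {g : (j : ZMod (m+1)) → 𝕏.Gp (𝕏.X.r (h j)) // P h g} ≃
          ((i : ZMod (m+1)) → {x : 𝕏.Gp (𝕏.X.r (h i)) // h i ≠ 𝕏.X.bar (h (i-1)) ∨ x ≠ 1}) := by
        refine (Equiv.subtypeEquivRight ?_).trans (Equiv.subtypePiEquivPi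
          (p := fun i (x : 𝕏.Gp (𝕏.X.r (h i))) => h i ≠ 𝕏.X.bar (h (i-1)) ∨ x ≠ 1))
        intro g
        constructor
        · rintro ⟨-, hq⟩ i
          have := hq (i - 1)
          have hi : i - 1 + 1 = i := by ring
          rw [hi] at this
          exact this
        · intro hq
          refine ⟨hc, fun j => ?_⟩
          have := hq (j + 1)
          have hj : j + 1 - 1 = j := by ring
          rw [hj] at this
          exact this
      rw [Fintype.card_congr e2, Fintype.card_pi]
      push_cast
      refine Finset.prod_congr rfl fun i _ => ?_
      have hri : 𝕏.X.r (𝕏.X.bar (h (i-1))) = 𝕏.X.r (h i) := by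
        have := hc (i - 1)
        have hi : i - 1 + 1 = i := by ring
        rw [hi] at this
        exact this.symm
      by_cases hb : h i = 𝕏.X.bar (h (i-1))
      · have ecard : Fintype.card {x : 𝕏.Gp (𝕏.X.r (h i)) // h i ≠ 𝕏.X.bar (h (i-1)) ∨ x ≠ 1}
            = 𝕏.charge (𝕏.X.r (h i)) - 1 := by
          rw [Fintype.card_congr (Equiv.subtypeEquivRight
            (q := fun x : 𝕏.Gp (𝕏.X.r (h i)) => ¬ (x = 1)) (fun x => by simp [hb]))]
          rw [Fintype.card_subtype_compl, Fintype.card_subtype_eq]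
          rfl
        rw [ecard, GraphOfGroups.Wmat, if_pos hb]
        have hpos : 1 ≤ 𝕏.charge (𝕏.X.r (h i)) := Fintype.card_pos
        omega
      · have ecard : Fintype.card {x : 𝕏.Gp (𝕏.X.r (h i)) // h i ≠ 𝕏.X.bar (h (i-1)) ∨ x ≠ 1}
            = 𝕏.charge (𝕏.X.r (h i)) := by
          rw [Fintype.card_congr (Equiv.subtypeUnivEquiv (fun x => Or.inl hb))]
          rfl
        rw [ecard, GraphOfGroups.Wmat, if_neg hb, if_pos hri]
    · obtain ⟨j, hj⟩ := not_forall.mp hc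
      have hcard : Fintype.card {g : (j : ZMod (m+1)) → 𝕏.Gp (𝕏.X.r (h j)) // P h g} = 0 :=
        Fintype.card_eq_zero_iff.mpr ⟨fun g => absurd g.2.1 hc⟩
      rw [hcard]
      have hz : 𝕏.Wmat (h (j + 1 - 1)) (h (j+1)) = 0 := by
        have hj1 : j + 1 - 1 = j := by ring
        rw [hj1, GraphOfGroups.Wmat]
        rw [if_neg fun hb => hj (by rw [hb]), if_neg fun e => hj e.symm]
      rw [Finset.prod_eq_zero (Finset.mem_univ (j + 1)) hz]
      simp
  calc (Nat.card (𝕏.CRPath (m+1)) : ℤ)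
      = ∑ h : ZMod (m+1) → 𝕏.X.H,
          (Fintype.card {g : (j : ZMod (m+1)) → 𝕏.Gp (𝕏.X.r (h j)) // P h g} : ℤ) := by
        rw [Nat.card_congr E1, Nat.card_eq_fintype_card, Fintype.card_sigma]
        push_cast
        rfl
    _ = ∑ h : ZMod (m+1) → 𝕏.X.H, ∏ j : ZMod (m+1), 𝕏.Wmat (h j) (h (j+1)) :=
        Finset.sum_congr rfl fun h _ => key h
    _ = Matrix.trace (𝕏.Wmat ^ (m+1)) := by
        rw [trace_pow_cyclic]
        refine Fintype.sum_equiv (Equiv.refl (Fin (m+1) → 𝕏.X.H) :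
          (ZMod (m+1) → 𝕏.X.H) ≃ (Fin (m+1) → 𝕏.X.H)) _ _ fun h => ?_
        refine Fintype.prod_equiv (Equiv.refl (Fin (m+1)) : ZMod (m+1) ≃ Fin (m+1)) _ _ fun j => ?_
        rfl
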